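/- Let ψ₁, ψ₂, ψ₃ ∈ ℂ² ⊗ ℂ² be linearly independent, and suppose ψ₁ and ψ₂ are both product vectors. Then there exists a product vector φ with ⟨ψ₁, φ⟩ = ⟨ψ₂, φ⟩ = 0 and ⟨ψ₃, φ⟩ ≠ 0. -/

import Mathlib

/-- The elementary tensor `a ⊗ b` of two Euclidean-space vectors, realised in
`EuclideanSpace ℂ (ι × κ)` (which carries the induced tensor inner product). -/
noncomputable def tens {ι κ : Type*} [Fintype ι] [Fintype κ]
    (a : EuclideanSpace ℂ ι) (b : EuclideanSpace ℂ κ) :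
    EuclideanSpace ℂ (ι × κ) :=
  WithLp.toLp 2 (fun p : ι × κ => a p.1 * b p.2)

/-- The standard basis vector `eᵢ` of `ℂ²`. -/
noncomputable def e (i : Fin 2) : EuclideanSpace ℂ (Fin 2) := EuclideanSpace.single i 1

noncomputable def perp (v : EuclideanSpace ℂ (Fin 2)) : EuclideanSpace ℂ (Fin 2) :=
  WithLp.toLp 2 ![(starRingEnd ℂ) (v 1), -(starRingEnd ℂ) (v 0)]

lemma perp_zero (v : EuclideanSpace ℂ (Fin 2)) : perp v 0 = (starRingEnd ℂ) (v 1) := rfl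
lemma perp_one (v : EuclideanSpace ℂ (Fin 2)) : perp v 1 = -(starRingEnd ℂ) (v 0) := rfl

lemma inner_tens (a b c d : EuclideanSpace ℂ (Fin 2)) :
    (inner ℂ (tens a b) (tens c d) : ℂ) = (inner ℂ a c : ℂ) * (inner ℂ b d : ℂ) := by
  simp only [PiLp.inner_apply, RCLike.inner_apply, tens, map_mul, Fintype.sum_prod_type,
    Finset.sum_mul_sum]
  exact Finset.sum_congr rfl fun i _ => Finset.sum_congr rfl fun j _ => by ring

lemma inner_perp (u v : EuclideanSpace ℂ (Fin 2)) :
    (inner ℂ u (perp v) : ℂ) = (starRingEnd ℂ) (u 0 * v 1 - u 1 * v 0) := by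
  simp only [PiLp.inner_apply, RCLike.inner_apply, Fin.sum_univ_two, perp_zero, perp_one,
    map_sub, map_mul]
  ring

lemma perp_inner (u v : EuclideanSpace ℂ (Fin 2)) :
    (inner ℂ (perp v) u : ℂ) = u 0 * v 1 - u 1 * v 0 := by
  rw [← inner_conj_symm, inner_perp]
  simp

lemma inner_perp_self (v : EuclideanSpace ℂ (Fin 2)) : (inner ℂ v (perp v) : ℂ) = 0 := by
  rw [inner_perp, show v 0 * v 1 - v 1 * v 0 = 0 from by ring, map_zero]

lemma perp_inner_self (v : EuclideanSpace ℂ (Fin 2)) : (inner ℂ (perp v) v : ℂ) = 0 := by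
  rw [← inner_conj_symm, inner_perp_self, map_zero]

lemma inner_perp_perp (u v : EuclideanSpace ℂ (Fin 2)) :
    (inner ℂ (perp u) (perp v) : ℂ) = (inner ℂ v u : ℂ) := by
  simp only [PiLp.inner_apply, RCLike.inner_apply, Fin.sum_univ_two, perp_zero, perp_one,
    map_sub, map_mul, map_neg, map_one, RingHomCompTriple.comp_apply, RingHom.id_apply]
  ring

lemma perp_ne_zero {v : EuclideanSpace ℂ (Fin 2)} (hv : v ≠ 0) : perp v ≠ 0 := by
  intro hp
  apply hv
  ext i
  have h0 : perp v 0 = 0 := by rw [hp]; rfl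
  have h1 : perp v 1 = 0 := by rw [hp]; rfl
  rw [perp_zero] at h0; rw [perp_one] at h1
  fin_cases i
  · simpa using congrArg (starRingEnd ℂ) h1
  · simpa using congrArg (starRingEnd ℂ) h0

lemma inner_e (u : EuclideanSpace ℂ (Fin 2)) (j : Fin 2) :
    (inner ℂ u (e j) : ℂ) = (starRingEnd ℂ) (u j) := by
  simp [e, PiLp.inner_apply, RCLike.inner_apply, EuclideanSpace.single_apply]

lemma e_ne_zero (j : Fin 2) : e j ≠ 0 := by
  intro hj
  have := congrArg (fun x : EuclideanSpace ℂ (Fin 2) => x j) hj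
  simp [e, EuclideanSpace.single_apply] at this

lemma tens_ne_zero {a b : EuclideanSpace ℂ (Fin 2)} (ha : a ≠ 0) (hb : b ≠ 0) :
    tens a b ≠ 0 := by
  have hia : ∃ i, a i ≠ 0 := by
    by_contra hc; push_neg at hc; exact ha (PiLp.ext hc)
  have hib : ∃ i, b i ≠ 0 := by
    by_contra hc; push_neg at hc; exact hb (PiLp.ext hc)
  obtain ⟨i, hi⟩ := hia
  obtain ⟨j, hj⟩ := hib
  intro h0
  exact mul_ne_zero hi hj (congrArg (fun x : EuclideanSpace ℂ (Fin 2 × Fin 2) => x (i, j)) h0)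

lemma tens_zero_left (b : EuclideanSpace ℂ (Fin 2)) : tens (0 : EuclideanSpace ℂ (Fin 2)) b = 0 := by
  ext p; show (0 : ℂ) * b p.2 = 0; ring

lemma tens_zero_right (a : EuclideanSpace ℂ (Fin 2)) : tens a (0 : EuclideanSpace ℂ (Fin 2)) = 0 := by
  ext p; show a p.1 * (0 : ℂ) = 0; ring

lemma indep_of_dual {E : Type*} [NormedAddCommGroup E] [InnerProductSpace ℂ E]
    (w₁ w₂ χ₁ χ₂ : E) (h11 : (inner ℂ w₁ χ₁ : ℂ) ≠ 0) (h21 : (inner ℂ w₂ χ₁ : ℂ) = 0)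
    (h22 : (inner ℂ w₂ χ₂ : ℂ) ≠ 0) (h12 : (inner ℂ w₁ χ₂ : ℂ) = 0) :
    LinearIndependent ℂ ![w₁, w₂] := by
  rw [LinearIndependent.pair_iff]
  intro s t hst
  constructor
  · have := congrArg (fun x => (inner ℂ x χ₁ : ℂ)) hst
    simp only [inner_add_left, inner_smul_left, inner_zero_left, h21, mul_zero, add_zero] at this
    rcases mul_eq_zero.1 this with hs | hs
    · simpa using hs
    · exact absurd hs h11
  · have := congrArg (fun x => (inner ℂ x χ₂ : ℂ)) hst
    simp only [inner_add_left, inner_smul_left, inner_zero_left, h12, mul_zero, zero_add] at this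
    rcases mul_eq_zero.1 this with hs | hs
    · simpa using hs
    · exact absurd hs h22

lemma no3 (ψ : Fin 3 → EuclideanSpace ℂ (Fin 2 × Fin 2))
    (φ : Fin 2 → EuclideanSpace ℂ (Fin 2 × Fin 2))
    (hψ : LinearIndependent ℂ ψ) (hφ : LinearIndependent ℂ φ)
    (ho : ∀ i j, (inner ℂ (ψ i) (φ j) : ℂ) = 0) : False := by
  set K := Submodule.span ℂ (Set.range φ) with hK
  have hmem : ∀ i, ψ i ∈ Kᗮ := by
    intro i
    rw [Submodule.mem_orthogonal]
    intro u hu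
    induction hu using Submodule.span_induction with
    | mem x hx => obtain ⟨j, rfl⟩ := hx; rw [← inner_conj_symm, ho i j, map_zero]
    | zero => simp
    | add x y _ _ hx hy => rw [inner_add_left, hx, hy, add_zero]
    | smul c x _ hx => rw [inner_smul_left, hx, mul_zero]
  let ψ' : Fin 3 → Kᗮ := fun i => ⟨ψ i, hmem i⟩
  have hψ' : LinearIndependent ℂ ψ' := by
    apply LinearIndependent.of_comp Kᗮ.subtype
    exact hψ
  have hcard : Fintype.card (Fin 3) ≤ Module.finrank ℂ Kᗮ :=
    hψ'.fintype_card_le_finrank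
  have hrk : Module.finrank ℂ K + Module.finrank ℂ Kᗮ = 4 := by
    rw [Submodule.finrank_add_finrank_orthogonal]
    simp [finrank_euclideanSpace]
  have hK2 : Module.finrank ℂ K = 2 := by
    rw [hK, finrank_span_eq_card hφ]
    simp
  simp [hK2, Fintype.card_fin] at hrk hcard
  omega

set_option maxHeartbeats 2000000 in
theorem stmt_8 (ψ₁ ψ₂ ψ₃ : EuclideanSpace ℂ (Fin 2 × Fin 2))
    (h : LinearIndependent ℂ ![ψ₁, ψ₂, ψ₃])
    (h₁ : ∃ a b, ψ₁ = tens a b) (h₂ : ∃ a b, ψ₂ = tens a b) :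
    ∃ (a b : EuclideanSpace ℂ (Fin 2)),
      (inner ℂ ψ₁ (tens a b) : ℂ) = 0 ∧ (inner ℂ ψ₂ (tens a b) : ℂ) = 0 ∧
      (inner ℂ ψ₃ (tens a b) : ℂ) ≠ 0 := by
  obtain ⟨a₁, b₁, h₁⟩ := h₁
  obtain ⟨a₂, b₂, h₂⟩ := h₂
  have hψ1 : ψ₁ ≠ 0 := by simpa using h.ne_zero 0
  have hψ2 : ψ₂ ≠ 0 := by simpa using h.ne_zero 1
  have ha₁ : a₁ ≠ 0 := fun h0 => hψ1 (by rw [h₁, h0, tens_zero_left])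
  have hb₁ : b₁ ≠ 0 := fun h0 => hψ1 (by rw [h₁, h0, tens_zero_right])
  have ha₂ : a₂ ≠ 0 := fun h0 => hψ2 (by rw [h₂, h0, tens_zero_left])
  have hb₂ : b₂ ≠ 0 := fun h0 => hψ2 (by rw [h₂, h0, tens_zero_right])
  by_cases hA : a₁ 0 * a₂ 1 - a₁ 1 * a₂ 0 = 0
  · -- first factors proportional: use (perp a₁) ⊗ (e j)
    have o1 : ∀ j, (inner ℂ ψ₁ (tens (perp a₁) (e j)) : ℂ) = 0 := fun j => by
      rw [h₁, inner_tens, inner_perp_self, zero_mul]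
    have o2 : ∀ j, (inner ℂ ψ₂ (tens (perp a₁) (e j)) : ℂ) = 0 := fun j => by
      rw [h₂, inner_tens, inner_perp,
        show a₂ 0 * a₁ 1 - a₂ 1 * a₁ 0 = 0 from by linear_combination -hA, map_zero, zero_mul]
    by_cases h3 : (inner ℂ ψ₃ (tens (perp a₁) (e 0)) : ℂ) = 0
    · by_cases h4 : (inner ℂ ψ₃ (tens (perp a₁) (e 1)) : ℂ) = 0
      · exfalso
        refine no3 ![ψ₁, ψ₂, ψ₃] ![tens (perp a₁) (e 0), tens (perp a₁) (e 1)] h ?_ ?_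
        · refine indep_of_dual _ _ (tens (perp a₁) (e 0)) (tens (perp a₁) (e 1)) ?_ ?_ ?_ ?_
          · exact inner_self_ne_zero.2 (tens_ne_zero (perp_ne_zero ha₁) (e_ne_zero 0))
          · rw [inner_tens, inner_e, show (e 1) 0 = (0:ℂ) from by
              simp [e, EuclideanSpace.single_apply], map_zero, mul_zero]
          · exact inner_self_ne_zero.2 (tens_ne_zero (perp_ne_zero ha₁) (e_ne_zero 1))
          · rw [inner_tens, inner_e, show (e 0) 1 = (0:ℂ) from by
              simp [e, EuclideanSpace.single_apply], map_zero, mul_zero]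
        · intro i j
          fin_cases i <;> fin_cases j <;>
            simp only [Matrix.cons_val_zero, Matrix.cons_val_one, Matrix.head_cons] <;>
            first | exact o1 _ | exact o2 _ | exact h3 | exact h4
      · exact ⟨perp a₁, e 1, o1 1, o2 1, h4⟩
    · exact ⟨perp a₁, e 0, o1 0, o2 0, h3⟩
  · by_cases hB : b₁ 0 * b₂ 1 - b₁ 1 * b₂ 0 = 0
    · -- second factors proportional: use (e j) ⊗ (perp b₁)
      have o1 : ∀ j, (inner ℂ ψ₁ (tens (e j) (perp b₁)) : ℂ) = 0 := fun j => by
        rw [h₁, inner_tens, inner_perp_self, mul_zero]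
      have o2 : ∀ j, (inner ℂ ψ₂ (tens (e j) (perp b₁)) : ℂ) = 0 := fun j => by
        rw [h₂, inner_tens, inner_perp,
          show b₂ 0 * b₁ 1 - b₂ 1 * b₁ 0 = 0 from by linear_combination -hB, map_zero, mul_zero]
      by_cases h3 : (inner ℂ ψ₃ (tens (e 0) (perp b₁)) : ℂ) = 0
      · by_cases h4 : (inner ℂ ψ₃ (tens (e 1) (perp b₁)) : ℂ) = 0
        · exfalso
          refine no3 ![ψ₁, ψ₂, ψ₃] ![tens (e 0) (perp b₁), tens (e 1) (perp b₁)] h ?_ ?_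
          · refine indep_of_dual _ _ (tens (e 0) (perp b₁)) (tens (e 1) (perp b₁)) ?_ ?_ ?_ ?_
            · exact inner_self_ne_zero.2 (tens_ne_zero (e_ne_zero 0) (perp_ne_zero hb₁))
            · rw [inner_tens, inner_e, show (e 1) 0 = (0:ℂ) from by
                simp [e, EuclideanSpace.single_apply], map_zero, zero_mul]
            · exact inner_self_ne_zero.2 (tens_ne_zero (e_ne_zero 1) (perp_ne_zero hb₁))
            · rw [inner_tens, inner_e, show (e 0) 1 = (0:ℂ) from by
                simp [e, EuclideanSpace.single_apply], map_zero, zero_mul]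
          · intro i j
            fin_cases i <;> fin_cases j <;>
              simp only [Matrix.cons_val_zero, Matrix.cons_val_one, Matrix.head_cons] <;>
              first | exact o1 _ | exact o2 _ | exact h3 | exact h4
        · exact ⟨e 1, perp b₁, o1 1, o2 1, h4⟩
      · exact ⟨e 0, perp b₁, o1 0, o2 0, h3⟩
    · -- generic case: use (perp a₂) ⊗ (perp b₁) and (perp a₁) ⊗ (perp b₂)
      have o11 : (inner ℂ ψ₁ (tens (perp a₂) (perp b₁)) : ℂ) = 0 := by
        rw [h₁, inner_tens, inner_perp_self, mul_zero]
      have o21 : (inner ℂ ψ₂ (tens (perp a₂) (perp b₁)) : ℂ) = 0 := by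
        rw [h₂, inner_tens, inner_perp_self, zero_mul]
      have o12 : (inner ℂ ψ₁ (tens (perp a₁) (perp b₂)) : ℂ) = 0 := by
        rw [h₁, inner_tens, inner_perp_self, zero_mul]
      have o22 : (inner ℂ ψ₂ (tens (perp a₁) (perp b₂)) : ℂ) = 0 := by
        rw [h₂, inner_tens, inner_perp_self, mul_zero]
      by_cases h3 : (inner ℂ ψ₃ (tens (perp a₂) (perp b₁)) : ℂ) = 0
      · by_cases h4 : (inner ℂ ψ₃ (tens (perp a₁) (perp b₂)) : ℂ) = 0
        · exfalso
          refine no3 ![ψ₁, ψ₂, ψ₃] ![tens (perp a₂) (perp b₁), tens (perp a₁) (perp b₂)] h ?_ ?_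
          · refine indep_of_dual _ _ (tens (perp (perp a₁)) (perp b₁))
              (tens (perp (perp a₂)) (perp b₂)) ?_ ?_ ?_ ?_
            · rw [inner_tens, inner_perp_perp, perp_inner]
              exact mul_ne_zero (fun hc => hA (by linear_combination -hc))
                (inner_self_ne_zero.2 (perp_ne_zero hb₁))
            · rw [inner_tens, inner_perp_perp, perp_inner_self, zero_mul]
            · rw [inner_tens, inner_perp_perp, perp_inner]
              exact mul_ne_zero (fun hc => hA hc)
                (inner_self_ne_zero.2 (perp_ne_zero hb₂))
            · rw [inner_tens, inner_perp_perp, perp_inner_self, zero_mul]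
          · intro i j
            fin_cases i <;> fin_cases j <;>
              simp only [Matrix.cons_val_zero, Matrix.cons_val_one, Matrix.head_cons] <;>
              first | exact o11 | exact o21 | exact o12 | exact o22 | exact h3 | exact h4
        · exact ⟨perp a₁, perp b₂, o12, o22, h4⟩
      · exact ⟨perp a₂, perp b₁, o11, o21, h3⟩
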